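/- For all positive integers m and n, the total number of subgroups of ℤ_m × ℤ_n equals Σ_{i ∣ m} Σ_{j ∣ n} gcd(i, j). -/

import Mathlib

open QuotientAddGroup

section Goursat
variable {G K : Type*} [AddCommGroup G] [AddCommGroup K]

/-- The subgroup of `G × K` associated to `(A, B, f)`. -/
def gSub (A : AddSubgroup G) (B : AddSubgroup K) (f : A →+ K ⧸ B) : AddSubgroup (G × K) where
  carrier := {p | ∃ h : p.1 ∈ A, f ⟨p.1, h⟩ = QuotientAddGroup.mk p.2}
  zero_mem' := by
    refine ⟨A.zero_mem, ?_⟩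
    have h0 : (⟨(0 : G × K).1, A.zero_mem⟩ : A) = 0 := rfl
    rw [h0, map_zero]
    rfl
  add_mem' := by
    rintro ⟨g₁, k₁⟩ ⟨g₂, k₂⟩ ⟨h₁, e₁⟩ ⟨h₂, e₂⟩
    refine ⟨A.add_mem h₁ h₂, ?_⟩
    show f (⟨g₁, h₁⟩ + ⟨g₂, h₂⟩) = QuotientAddGroup.mk (k₁ + k₂)
    rw [map_add, e₁, e₂]
    rfl
  neg_mem' := by
    rintro ⟨g, k⟩ ⟨h, e⟩
    refine ⟨A.neg_mem h, ?_⟩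
    show f (-⟨g, h⟩) = QuotientAddGroup.mk (-k)
    rw [map_neg, e]
    rfl

lemma mem_gSub {A : AddSubgroup G} {B : AddSubgroup K} {f : A →+ K ⧸ B} {p : G × K} :
    p ∈ gSub A B f ↔ ∃ h : p.1 ∈ A, f ⟨p.1, h⟩ = QuotientAddGroup.mk p.2 := Iff.rfl

lemma gSub_injective :
    Function.Injective
      (fun t : Σ A : AddSubgroup G, Σ B : AddSubgroup K, (A →+ K ⧸ B) =>
        gSub t.1 t.2.1 t.2.2) := by
  rintro ⟨A, B, f⟩ ⟨A', B', f'⟩ h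
  simp only at h
  obtain rfl : A = A' := by
    ext g
    constructor
    · intro hg
      obtain ⟨k, hk⟩ := QuotientAddGroup.mk_surjective (f ⟨g, hg⟩)
      have : (g, k) ∈ gSub A B f := ⟨hg, hk.symm⟩
      rw [h] at this
      exact this.1
    · intro hg
      obtain ⟨k, hk⟩ := QuotientAddGroup.mk_surjective (f' ⟨g, hg⟩)
      have : (g, k) ∈ gSub A' B' f' := ⟨hg, hk.symm⟩
      rw [← h] at this
      exact this.1
  obtain rfl : B = B' := by
    ext b
    have hiff : ∀ (B₀ : AddSubgroup K) (f₀ : A →+ K ⧸ B₀), ((0 : G), b) ∈ gSub A B₀ f₀ ↔ b ∈ B₀ := by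
      intro B₀ f₀
      constructor
      · rintro ⟨h0, e0⟩
        have : (⟨(0:G), h0⟩ : A) = 0 := rfl
        rw [this, map_zero] at e0
        exact (QuotientAddGroup.eq_zero_iff b).mp e0.symm
      · intro hb
        refine ⟨A.zero_mem, ?_⟩
        have : (⟨(0:G), A.zero_mem⟩ : A) = 0 := rfl
        rw [this, map_zero]
        exact ((QuotientAddGroup.eq_zero_iff b).mpr hb).symm
    rw [← hiff B f, h, hiff B' f']
  obtain rfl : f = f' := by
    ext a
    obtain ⟨k, hk⟩ := QuotientAddGroup.mk_surjective (f a)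
    have hmem : ((a : G), k) ∈ gSub A B f := ⟨a.2, by rw [Subtype.coe_eta]; exact hk.symm⟩
    rw [h] at hmem
    obtain ⟨h', e'⟩ := hmem
    rw [Subtype.coe_eta] at e'
    rw [e', hk]
  rfl

lemma gSub_surjective :
    Function.Surjective
      (fun t : Σ A : AddSubgroup G, Σ B : AddSubgroup K, (A →+ K ⧸ B) =>
        gSub t.1 t.2.1 t.2.2) := by
  intro I
  set A : AddSubgroup G := I.map (AddMonoidHom.fst G K) with hA
  set B : AddSubgroup K := I.comap (AddMonoidHom.inr G K) with hB
  have memB : ∀ b : K, b ∈ B ↔ ((0 : G), b) ∈ I := fun b => Iff.rfl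
  have key : ∀ {g : G} {k k' : K}, (g, k) ∈ I → (g, k') ∈ I →
      (QuotientAddGroup.mk k : K ⧸ B) = QuotientAddGroup.mk k' := by
    intro g k k' h1 h2
    rw [QuotientAddGroup.eq_iff_sub_mem]
    have : ((g, k) - (g, k') : G × K) ∈ I := sub_mem h1 h2
    have h3 : ((0 : G), k - k') ∈ I := by
      simpa [Prod.sub_def] using this
    exact (memB _).mpr h3
  have spec : ∀ a : A, ∃ k : K, ((a : G), k) ∈ I := by
    rintro ⟨a, ha⟩
    obtain ⟨⟨g, k⟩, hgk, hg⟩ := ha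
    simp only [AddMonoidHom.coe_fst] at hg
    subst hg
    exact ⟨k, hgk⟩
  choose w hw using spec
  refine ⟨⟨A, B, { toFun := fun a => QuotientAddGroup.mk (w a), map_zero' := ?_, map_add' := ?_ }⟩, ?_⟩
  · have h0 : ((0 : G), (0 : K)) ∈ I := I.zero_mem
    exact key (hw 0) h0
  · intro a b
    have h1 : ((a : G) + (b : G), w a + w b) ∈ I := by
      simpa [Prod.add_def] using add_mem (hw a) (hw b)
    exact key (hw (a + b)) h1
  · simp only
    ext ⟨g, k⟩
    rw [mem_gSub]
    constructor
    · rintro ⟨hg, e⟩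
      have hwk : (QuotientAddGroup.mk (w ⟨g, hg⟩) : K ⧸ B) = QuotientAddGroup.mk k := e
      rw [QuotientAddGroup.eq_iff_sub_mem] at hwk
      have h1 : ((0 : G), w ⟨g, hg⟩ - k) ∈ I := (memB _).mp hwk
      have := sub_mem (hw ⟨g, hg⟩) h1
      simpa [Prod.sub_def] using this
    · intro hgk
      have hg : g ∈ A := ⟨(g, k), hgk, rfl⟩
      exact ⟨hg, key (hw ⟨g, hg⟩) hgk⟩
end Goursat

instance addMonoidHomFinite {M N : Type*} [AddZeroClass M] [AddZeroClass N] [Finite M] [Finite N] :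
    Finite (M →+ N) :=
  Finite.of_injective (fun f => (f : M → N)) DFunLike.coe_injective

lemma nat_card_sigma {ι : Type*} [Fintype ι] (σ : ι → Type*) [∀ i, Finite (σ i)] :
    Nat.card (Σ i, σ i) = ∑ i, Nat.card (σ i) := by
  haveI : ∀ i, Fintype (σ i) := fun i => Fintype.ofFinite _
  simp [Nat.card_eq_fintype_card, Fintype.card_sigma]

lemma range_mulLeft (n : ℕ) (c : ZMod n) :
    (AddMonoidHom.mulLeft c).range = AddSubgroup.zmultiples c := by
  ext x
  simp only [AddMonoidHom.mem_range, AddSubgroup.mem_zmultiples_iff]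
  constructor
  · rintro ⟨y, rfl⟩
    obtain ⟨k, rfl⟩ := ZMod.intCast_surjective y
    exact ⟨k, by rw [zsmul_eq_mul, mul_comm]; rfl⟩
  · rintro ⟨k, rfl⟩
    exact ⟨(k : ZMod n), by rw [zsmul_eq_mul, mul_comm]; rfl⟩

lemma card_ker_mulLeft (n d : ℕ) [NeZero n] :
    Nat.card (AddMonoidHom.mulLeft ((d : ℕ) : ZMod n)).ker = Nat.gcd d n := by
  have hn : n ≠ 0 := NeZero.ne n
  have hcard := AddSubgroup.card_eq_card_quotient_mul_card_addSubgroup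
    (AddMonoidHom.mulLeft ((d : ℕ) : ZMod n)).ker
  rw [Nat.card_zmod] at hcard
  have hq : Nat.card (ZMod n ⧸ (AddMonoidHom.mulLeft ((d : ℕ) : ZMod n)).ker)
      = n / Nat.gcd n d := by
    rw [Nat.card_congr (QuotientAddGroup.quotientKerEquivRange _).toEquiv,
      range_mulLeft, Nat.card_zmultiples, ZMod.addOrderOf_coe d hn]
  rw [hq] at hcard
  have hg : Nat.gcd n d ∣ n := Nat.gcd_dvd_left n d
  have hpos : 0 < n / Nat.gcd n d := Nat.div_pos (Nat.le_of_dvd (Nat.pos_of_ne_zero hn) hg)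
    (Nat.pos_of_ne_zero fun h => hn (Nat.eq_zero_of_gcd_eq_zero_left h))
  have := Nat.div_eq_of_eq_mul_left hpos (hcard.trans (mul_comm _ _))
  rw [← this, Nat.div_div_self hg hn, Nat.gcd_comm]

lemma card_hom_zmod (i j : ℕ) [NeZero j] :
    Nat.card (ZMod i →+ ZMod j) = Nat.gcd i j := by
  have e1 : (ZMod i →+ ZMod j) ≃ {f : ℤ →+ ZMod j // f (i : ℤ) = 0} := (ZMod.lift i).symm
  have e2 : {f : ℤ →+ ZMod j // f (i : ℤ) = 0} ≃ {x : ZMod j // ((i : ℕ) : ZMod j) * x = 0} := by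
    refine (Equiv.subtypeEquiv (zmultiplesHom (ZMod j)).symm ?_)
    intro f
    show f (i : ℤ) = 0 ↔ ((i : ℕ) : ZMod j) * f 1 = 0
    have : f (i : ℤ) = ((i : ℤ) • f 1) := by
      rw [← map_zsmul f (i : ℤ) 1, smul_eq_mul, mul_one]
    rw [this, zsmul_eq_mul, Int.cast_natCast]
  have e3 : {x : ZMod j // ((i : ℕ) : ZMod j) * x = 0}
      ≃ (AddMonoidHom.mulLeft ((i : ℕ) : ZMod j)).ker := by
    refine Equiv.subtypeEquivRight ?_
    intro x
    simp [AddMonoidHom.mem_ker, AddMonoidHom.mulLeft]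
  rw [Nat.card_congr ((e1.trans e2).trans e3), card_ker_mulLeft]

lemma card_hom_cyclic {A Q : Type*} [AddCommGroup A] [AddCommGroup Q] [Finite A] [Finite Q]
    [hA : IsAddCyclic A] [hQ : IsAddCyclic Q] :
    Nat.card (A →+ Q) = Nat.gcd (Nat.card A) (Nat.card Q) := by
  haveI : NeZero (Nat.card Q) := ⟨Nat.card_pos.ne'⟩
  have e := (AddEquiv.addMonoidHomCongrLeft (N := Q) (zmodAddCyclicAddEquiv hA).symm).trans (AddEquiv.addMonoidHomCongrRight (zmodAddCyclicAddEquiv hQ).symm)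
  rw [Nat.card_congr e.toEquiv, card_hom_zmod]

lemma card_subgroup_dvd (n : ℕ) [NeZero n] (B : AddSubgroup (ZMod n)) : Nat.card B ∣ n := by
  have := AddSubgroup.card_addSubgroup_dvd_card B
  rwa [Nat.card_zmod] at this

lemma subgroup_eq_ker (n : ℕ) [NeZero n] (B : AddSubgroup (ZMod n)) :
    B = (AddMonoidHom.mulLeft ((Nat.card B : ℕ) : ZMod n)).ker := by
  have hd : Nat.card B ∣ n := card_subgroup_dvd n B
  apply AddSubgroup.eq_of_le_of_card_ge
  · intro x hx
    have h1 : addOrderOf (⟨x, hx⟩ : B) ∣ Nat.card B := addOrderOf_dvd_natCard _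
    have h2 : (Nat.card B) • (⟨x, hx⟩ : B) = 0 := addOrderOf_dvd_iff_nsmul_eq_zero.mp h1
    show ((Nat.card B : ℕ) : ZMod n) * x = 0
    have h3 : (Nat.card B) • x = 0 := congrArg Subtype.val h2
    rw [← nsmul_eq_mul]
    exact h3
  · rw [card_ker_mulLeft n (Nat.card B), Nat.gcd_eq_left hd]

lemma card_zmultiples_div (n j : ℕ) [NeZero n] (hj : j ∣ n) :
    Nat.card (AddSubgroup.zmultiples (((n / j : ℕ)) : ZMod n)) = j := by
  have hn : n ≠ 0 := NeZero.ne n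
  rw [Nat.card_zmultiples, ZMod.addOrderOf_coe _ hn,
    Nat.gcd_eq_right (Nat.div_dvd_of_dvd hj), Nat.div_div_self hj hn]

lemma sum_over_subgroups {M : Type*} [AddCommMonoid M] (n : ℕ) [NeZero n]
    [Fintype (AddSubgroup (ZMod n))] (g : ℕ → M) :
    ∑ B : AddSubgroup (ZMod n), g (Nat.card B) = ∑ j ∈ n.divisors, g j := by
  refine Finset.sum_bij (fun B _ => Nat.card B) ?_ ?_ ?_ ?_
  · intro B _
    rw [Nat.mem_divisors]
    exact ⟨card_subgroup_dvd n B, NeZero.ne n⟩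
  · intro B _ C _ h
    have h' : Nat.card B = Nat.card C := h
    rw [subgroup_eq_ker n B, subgroup_eq_ker n C, h']
  · intro j hj
    rw [Nat.mem_divisors] at hj
    exact ⟨AddSubgroup.zmultiples (((n / j : ℕ)) : ZMod n), Finset.mem_univ _,
      card_zmultiples_div n j hj.1⟩
  · intros
    rfl

lemma card_quotient_eq (n : ℕ) [NeZero n] (B : AddSubgroup (ZMod n)) :
    Nat.card (ZMod n ⧸ B) = n / Nat.card B := by
  have h := AddSubgroup.card_eq_card_quotient_mul_card_addSubgroup B
  rw [Nat.card_zmod] at h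
  haveI : Finite B := inferInstance
  exact (Nat.div_eq_of_eq_mul_left Nat.card_pos h).symm

theorem subgroup_count_two (m n : ℕ) (hm : 0 < m) (hn : 0 < n) :
    Nat.card (AddSubgroup (ZMod m × ZMod n)) =
      ∑ i ∈ m.divisors, ∑ j ∈ n.divisors, Nat.gcd i j := by
  haveI : NeZero m := ⟨hm.ne'⟩
  haveI : NeZero n := ⟨hn.ne'⟩
  haveI : Fintype (AddSubgroup (ZMod m)) := Fintype.ofFinite _
  haveI : Fintype (AddSubgroup (ZMod n)) := Fintype.ofFinite _
  rw [← Nat.card_eq_of_bijective _ ⟨gSub_injective, gSub_surjective⟩]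
  rw [nat_card_sigma]
  have step : ∀ A : AddSubgroup (ZMod m),
      Nat.card (Σ B : AddSubgroup (ZMod n), (A →+ ZMod n ⧸ B))
        = ∑ j ∈ n.divisors, Nat.gcd (Nat.card A) j := by
    intro A
    rw [nat_card_sigma]
    have hpt : ∀ B : AddSubgroup (ZMod n),
        Nat.card (A →+ ZMod n ⧸ B) = Nat.gcd (Nat.card A) (n / Nat.card B) := by
      intro B
      haveI : IsAddCyclic (ZMod n ⧸ B) :=
        isAddCyclic_of_surjective (QuotientAddGroup.mk' B) (QuotientAddGroup.mk'_surjective B)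
      rw [card_hom_cyclic, card_quotient_eq]
    calc ∑ B : AddSubgroup (ZMod n), Nat.card (A →+ ZMod n ⧸ B)
        = ∑ B : AddSubgroup (ZMod n), Nat.gcd (Nat.card A) (n / Nat.card B) := by
          exact Finset.sum_congr rfl fun B _ => hpt B
      _ = ∑ j ∈ n.divisors, Nat.gcd (Nat.card A) (n / j) :=
          sum_over_subgroups n (fun j => Nat.gcd (Nat.card A) (n / j))
      _ = ∑ j ∈ n.divisors, Nat.gcd (Nat.card A) j :=
          Nat.sum_div_divisors n (fun j => Nat.gcd (Nat.card A) j)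
  calc ∑ A : AddSubgroup (ZMod m), Nat.card (Σ B : AddSubgroup (ZMod n), (A →+ ZMod n ⧸ B))
      = ∑ A : AddSubgroup (ZMod m), ∑ j ∈ n.divisors, Nat.gcd (Nat.card A) j :=
        Finset.sum_congr rfl fun A _ => step A
    _ = ∑ i ∈ m.divisors, ∑ j ∈ n.divisors, Nat.gcd i j :=
        sum_over_subgroups m (fun i => ∑ j ∈ n.divisors, Nat.gcd i j)
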